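/- In the ring ℤ[ζ₂₇]/(1−ζ₂₇)³ (ζ₂₇ a primitive 27th root of unity, σ the involution ζ ↦ ζ⁻¹), the set of units u satisfying u·u^σ ≡ 1 (mod (1−ζ₂₇)³) has exactly 6 elements, and these are precisely the classes of ±ζ₂₇^k for k = 0, 1, 2. -/

import Mathlib

set_option synthInstance.maxHeartbeats 400000
set_option maxHeartbeats 1000000


open Polynomial

/-- The ring `ℤ[ζ₂₇] = ℤ[x]/Φ₂₇(x)`. -/
abbrev R18 : Type := AdjoinRoot (cyclotomic 27 ℤ)

/-- The root `ζ₂₇`. -/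
noncomputable def z18 : R18 := AdjoinRoot.root (cyclotomic 27 ℤ)

/-- The ideal `((1 - ζ₂₇)³)`. -/
noncomputable def I18 : Ideal R18 := Ideal.span {(1 - z18) ^ 3}

/-- The quotient ring `ℤ[ζ₂₇]/(1 - ζ₂₇)³`. -/
abbrev Q18 : Type := R18 ⧸ I18

@[ext] structure A18 where
  a : ZMod 3
  b : ZMod 3
  c : ZMod 3
deriving DecidableEq

namespace A18

instance : Zero A18 := ⟨⟨0,0,0⟩⟩
instance : One A18 := ⟨⟨1,0,0⟩⟩
instance : Add A18 := ⟨fun x y => ⟨x.a+y.a, x.b+y.b, x.c+y.c⟩⟩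
instance : Neg A18 := ⟨fun x => ⟨-x.a, -x.b, -x.c⟩⟩
instance : Mul A18 := ⟨fun x y => ⟨x.a*y.a, x.a*y.b+x.b*y.a, x.a*y.c+x.b*y.b+x.c*y.a⟩⟩

instance : Fintype A18 :=
  Fintype.ofEquiv (ZMod 3 × ZMod 3 × ZMod 3)
    ⟨fun p => ⟨p.1, p.2.1, p.2.2⟩, fun x => (x.a, x.b, x.c), fun _ => rfl, fun _ => rfl⟩

@[simp] lemma zero_a : (0:A18).a = 0 := rfl
@[simp] lemma zero_b : (0:A18).b = 0 := rfl
@[simp] lemma zero_c : (0:A18).c = 0 := rfl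
@[simp] lemma one_a : (1:A18).a = 1 := rfl
@[simp] lemma one_b : (1:A18).b = 0 := rfl
@[simp] lemma one_c : (1:A18).c = 0 := rfl
@[simp] lemma add_a (x y : A18) : (x+y).a = x.a+y.a := rfl
@[simp] lemma add_b (x y : A18) : (x+y).b = x.b+y.b := rfl
@[simp] lemma add_c (x y : A18) : (x+y).c = x.c+y.c := rfl
@[simp] lemma neg_a (x : A18) : (-x).a = -x.a := rfl
@[simp] lemma neg_b (x : A18) : (-x).b = -x.b := rfl
@[simp] lemma neg_c (x : A18) : (-x).c = -x.c := rfl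
@[simp] lemma mul_a (x y : A18) : (x*y).a = x.a*y.a := rfl
@[simp] lemma mul_b (x y : A18) : (x*y).b = x.a*y.b+x.b*y.a := rfl
@[simp] lemma mul_c (x y : A18) : (x*y).c = x.a*y.c+x.b*y.b+x.c*y.a := rfl

instance : CommRing A18 where
  add_assoc x y z := by ext <;> simp <;> ring
  zero_add x := by ext <;> simp
  add_zero x := by ext <;> simp
  add_comm x y := by ext <;> simp <;> ring
  neg_add_cancel x := by ext <;> simp
  left_distrib x y z := by ext <;> simp <;> ring
  right_distrib x y z := by ext <;> simp <;> ring
  zero_mul x := by ext <;> simp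
  mul_zero x := by ext <;> simp
  mul_assoc x y z := by ext <;> simp <;> ring
  one_mul x := by ext <;> simp
  mul_one x := by ext <;> simp
  mul_comm x y := by ext <;> simp <;> ring
  nsmul := nsmulRec
  zsmul := zsmulRec

def ι : ZMod 3 →+* A18 where
  toFun a := ⟨a, 0, 0⟩
  map_one' := rfl
  map_mul' x y := by ext <;> simp
  map_zero' := rfl
  map_add' x y := by ext <;> simp

lemma ι_inj : Function.Injective ι := fun x y h => congrArg A18.a h

instance : CharP A18 3 := charP_of_injective_ringHom ι_inj 3

/-- the generator `g = 1 - t` (image of ζ). -/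
def g : A18 := ⟨1, 2, 0⟩
/-- `t` -/
def t : A18 := ⟨0, 1, 0⟩

example : 1 + g ^ 9 + g ^ 18 = 0 := by decide
example : t ^ 3 = 0 := by decide
example : ∀ x : A18, x = ι x.a + ι x.b * t + ι x.c * t^2 := by decide

def w : A18 := 1 - g ^ 26

/-- explicit formula for the conjugation on `A18`. -/
def τ₀ (x : A18) : A18 := ι x.a + ι x.b * w + ι x.c * w^2

lemma keyS : ∀ x : A18, (x * τ₀ x = 1 ↔ ∃ k : Fin 3, x = g^(k:ℕ) ∨ x = -g^(k:ℕ)) := by decide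

lemma card6 : Fintype.card {x : A18 // ∃ k : Fin 3, x = g^(k:ℕ) ∨ x = -g^(k:ℕ)} = 6 := by decide

end A18




lemma hcyc : cyclotomic 27 ℤ = 1 + X ^ 9 + (X ^ 9) ^ 2 := by
  have h : (27 : ℕ) = 3 ^ (2 + 1) := by norm_num
  rw [h, cyclotomic_prime_pow_eq_geom_sum (by norm_num)]
  rw [Finset.sum_range_succ, Finset.sum_range_succ, Finset.sum_range_one]
  ring

lemma hgroot : (cyclotomic 27 ℤ).eval₂ (Int.castRingHom A18) A18.g = 0 := by
  rw [hcyc]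
  simp only [eval₂_add, eval₂_one, eval₂_pow, eval₂_X]
  decide


noncomputable def φ18 : R18 →+* A18 := AdjoinRoot.lift (Int.castRingHom A18) A18.g hgroot

lemma φ18_root : φ18 z18 = A18.g := AdjoinRoot.lift_root hgroot

lemma tcube : (A18.t : A18) ^ 3 = 0 := by decide
lemma one_sub_g : (1 : A18) - A18.g = A18.t := by decide

noncomputable def ψ18 : Q18 →+* A18 :=
  Ideal.Quotient.lift I18 φ18 (by
    intro x hx
    rw [I18, Ideal.mem_span_singleton] at hx
    obtain ⟨y, rfl⟩ := hx
    rw [map_mul, map_pow, map_sub, map_one, φ18_root, one_sub_g, tcube, zero_mul])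

lemma ψ18_mk (r : R18) : ψ18 (Ideal.Quotient.mk I18 r) = φ18 r := rfl

lemma ψ18_z : ψ18 (Ideal.Quotient.mk I18 z18) = A18.g := by rw [ψ18_mk, φ18_root]

noncomputable abbrev xQ : Q18 := Ideal.Quotient.mk I18 z18

lemma hcube : ((1 : Q18) - xQ) ^ 3 = 0 := by
  have : ((1:Q18) - xQ) ^ 3 = Ideal.Quotient.mk I18 ((1 - z18) ^ 3) := by
    rw [map_pow, map_sub, map_one]
  rw [this, Ideal.Quotient.eq_zero_iff_mem]
  exact Ideal.subset_span rfl

lemma hrel : 1 + xQ ^ 9 + (xQ ^ 9) ^ 2 = 0 := by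
  have h : (1:R18) + z18 ^ 9 + (z18 ^ 9) ^ 2 = 0 := by
    calc (1:R18) + z18 ^ 9 + (z18 ^ 9) ^ 2
        = AdjoinRoot.mk (cyclotomic 27 ℤ) (1 + X ^ 9 + (X ^ 9) ^ 2) := by
          rw [map_add, map_add, map_one, map_pow, map_pow, map_pow, AdjoinRoot.mk_X]; rfl
      _ = AdjoinRoot.mk (cyclotomic 27 ℤ) (cyclotomic 27 ℤ) := by rw [hcyc]
      _ = 0 := AdjoinRoot.mk_self
  have := congrArg (Ideal.Quotient.mk I18) h
  simpa [map_add, map_pow, map_one] using this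

set_option maxHeartbeats 2000000 in
lemma h30 : (3 : Q18) = 0 := by
  linear_combination (28 - 45*xQ + 18*xQ^2) * hrel +
    (-25 - 30*xQ - 33*xQ^2 - 34*xQ^3 - 33*xQ^4 - 30*xQ^5 - 25*xQ^6 - 18*xQ^7 - 9*xQ^8
      - 26*xQ^9 - 24*xQ^10 - 21*xQ^11 - 17*xQ^12 - 12*xQ^13 - 6*xQ^14 + xQ^15
      + 9*xQ^16 + 18*xQ^17) * hcube

instance : CharP Q18 3 := by
  constructor
  intro n
  constructor
  · intro h
    have h2 : ((n : ℕ) : A18) = 0 := by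
      have := congrArg ψ18 h
      rwa [map_natCast, map_zero] at this
    exact (CharP.cast_eq_zero_iff A18 3 n).mp h2
  · intro h
    obtain ⟨m, rfl⟩ := h
    push_cast
    rw [h30, zero_mul]

noncomputable def ι' : ZMod 3 →+* Q18 := ZMod.castHom (dvd_refl 3) Q18

set_option maxHeartbeats 1000000 in
noncomputable def j18 : A18 →+* Q18 where
  toFun x := ι' x.a + ι' x.b * (1 - xQ) + ι' x.c * (1 - xQ)^2
  map_one' := by simp
  map_zero' := by simp
  map_add' x y := by simp only [A18.add_a, A18.add_b, A18.add_c, map_add]; ring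
  map_mul' x y := by
    simp only [A18.mul_a, A18.mul_b, A18.mul_c, map_add, map_mul]
    linear_combination (-(ι' x.b * ι' y.c + ι' x.c * ι' y.b + ι' x.c * ι' y.c * (1-xQ))) * hcube

lemma j18_apply (x : A18) : j18 x = ι' x.a + ι' x.b * (1 - xQ) + ι' x.c * (1 - xQ)^2 := rfl

lemma hji : ∀ q : Q18, j18 (ψ18 q) = q := by
  have key : (j18.comp ψ18).comp (Ideal.Quotient.mk I18) = Ideal.Quotient.mk I18 := by
    have h2 : ((j18.comp ψ18).comp (Ideal.Quotient.mk I18)).toIntAlgHom =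
        (Ideal.Quotient.mk I18).toIntAlgHom := by
      apply AdjoinRoot.algHom_ext
      show j18 (ψ18 (Ideal.Quotient.mk I18 z18)) = Ideal.Quotient.mk I18 (AdjoinRoot.root _)
      rw [ψ18_z, j18_apply]
      show ι' 1 + ι' 2 * (1 - xQ) + ι' 0 * (1 - xQ)^2 = xQ
      rw [map_one, map_zero, map_ofNat]
      linear_combination (1 - xQ) * h30
    exact congrArg AlgHom.toRingHom h2
  intro q
  obtain ⟨r, rfl⟩ := Ideal.Quotient.mk_surjective q
  exact DFunLike.congr_fun key r

lemma ψ18_one_sub : ψ18 (1 - xQ) = A18.t := by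
  rw [map_sub, map_one, ψ18_z, one_sub_g]

lemma decompA : ∀ y : A18, A18.ι y.a + A18.ι y.b * A18.t + A18.ι y.c * A18.t^2 = y := by decide

lemma hij : ∀ y : A18, ψ18 (j18 y) = y := by
  intro y
  have hcomp : ψ18.comp ι' = A18.ι := RingHom.ext_zmod _ _
  have hc : ∀ a : ZMod 3, ψ18 (ι' a) = A18.ι a := fun a => DFunLike.congr_fun hcomp a
  rw [j18_apply, map_add, map_add, map_mul, map_mul, map_pow, hc, hc, hc, ψ18_one_sub]
  exact decompA y

noncomputable def e18 : Q18 ≃+* A18 :=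
  { toFun := ψ18, invFun := j18, left_inv := hji, right_inv := hij,
    map_mul' := map_mul ψ18, map_add' := map_add ψ18 }

lemma e18_z : e18 xQ = A18.g := ψ18_z

/-- every ring hom `A18 →+* A18` is determined by its value on `t`. -/
lemma hom_apply (h : A18 →+* A18) (y : A18) :
    h y = A18.ι y.a + A18.ι y.b * h A18.t + A18.ι y.c * (h A18.t)^2 := by
  have hcomp : h.comp A18.ι = A18.ι := RingHom.ext_zmod _ _
  have hc : ∀ a : ZMod 3, h (A18.ι a) = A18.ι a := fun a => DFunLike.congr_fun hcomp a
  conv_lhs => rw [← decompA y]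
  rw [map_add, map_add, map_mul, map_mul, map_pow, hc, hc, hc]

lemma τ_formula (h : A18 →+* A18) (hg : h A18.g = A18.g ^ 26) : ∀ y, h y = A18.τ₀ y := by
  intro y
  have htt : h A18.t = A18.w := by
    have h1 : A18.t = 1 - A18.g := by decide
    rw [h1, map_sub, map_one, hg]; rfl
  rw [hom_apply h y, htt]; rfl


/-- In `ℤ[ζ₂₇]/(1-ζ₂₇)³`, with `σ` the involution induced by
`ζ ↦ ζ⁻¹ = ζ²⁶`, the set of units `u` with `u·u^σ = 1` has exactly `6` elements,
and these are precisely the classes of `±ζ₂₇^k` for `k = 0, 1, 2`. -/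
theorem stmt18 (σ : Q18 ≃+* Q18)
    (hσ : σ (Ideal.Quotient.mk I18 z18) = (Ideal.Quotient.mk I18 z18) ^ 26) :
    Nat.card {u : Q18ˣ // (u : Q18) * σ (u : Q18) = 1} = 6 ∧
    ∀ u : Q18ˣ, ((u : Q18) * σ (u : Q18) = 1 ↔
      ∃ k : Fin 3, (u : Q18) = (Ideal.Quotient.mk I18 z18) ^ (k : ℕ) ∨
        (u : Q18) = -(Ideal.Quotient.mk I18 z18) ^ (k : ℕ)) := by
  set T : A18 →+* A18 :=
    (e18.toRingHom.comp σ.toRingHom).comp e18.symm.toRingHom with hTdef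
  have hT : ∀ q : Q18, T (e18 q) = e18 (σ q) := by
    intro q
    simp [hTdef, RingEquiv.symm_apply_apply]
  have hTg : T A18.g = A18.g ^ 26 := by
    rw [← e18_z, hT, hσ, map_pow, e18_z]
  have hT0 : ∀ y, T y = A18.τ₀ y := τ_formula T hTg
  have transfer : ∀ q : Q18, (q * σ q = 1 ↔ e18 q * A18.τ₀ (e18 q) = 1) := by
    intro q
    have h1 : e18 (q * σ q) = e18 q * A18.τ₀ (e18 q) := by
      rw [map_mul, ← hT, hT0]
    constructor
    · intro h; rw [← h1, h, map_one]
    · intro h; apply e18.injective; rw [h1, h, map_one]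
  have hiffA : ∀ q : Q18, ((∃ k : Fin 3, e18 q = A18.g^(k:ℕ) ∨ e18 q = -A18.g^(k:ℕ)) ↔
      (∃ k : Fin 3, q = xQ ^ (k:ℕ) ∨ q = -xQ ^ (k:ℕ))) := by
    intro q
    constructor
    · rintro ⟨k, h | h⟩ <;> refine ⟨k, ?_⟩
      · left; apply e18.injective; rw [h, map_pow, e18_z]
      · right; apply e18.injective; rw [h, map_neg, map_pow, e18_z]
    · rintro ⟨k, h | h⟩ <;> refine ⟨k, ?_⟩
      · left; rw [h, map_pow, e18_z]
      · right; rw [h, map_neg, map_pow, e18_z]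
  have part2 : ∀ u : Q18ˣ, ((u : Q18) * σ (u : Q18) = 1 ↔
      ∃ k : Fin 3, (u : Q18) = xQ ^ (k:ℕ) ∨ (u : Q18) = -xQ ^ (k:ℕ)) := by
    intro u
    rw [transfer, A18.keyS, hiffA]
  refine ⟨?_, part2⟩
  let f : {u : Q18ˣ // (u : Q18) * σ (u : Q18) = 1} →
      {x : A18 // ∃ k : Fin 3, x = A18.g^(k:ℕ) ∨ x = -A18.g^(k:ℕ)} :=
    fun u => ⟨e18 (u.1 : Q18), (A18.keyS _).mp ((transfer _).mp u.2)⟩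
  have hbij : Function.Bijective f := by
    constructor
    · intro u v h
      exact Subtype.ext (Units.ext (e18.injective (congrArg Subtype.val h)))
    · rintro ⟨x, hx⟩
      have hx1 : x * A18.τ₀ x = 1 := (A18.keyS x).mpr hx
      have hq : e18.symm x * e18.symm (A18.τ₀ x) = 1 := by
        rw [← map_mul, hx1, map_one]
      obtain ⟨u, hu⟩ := IsUnit.of_mul_eq_one _ hq
      have hex : e18 (u : Q18) = x := by rw [hu, RingEquiv.apply_symm_apply]
      have hP : (u : Q18) * σ (u : Q18) = 1 := by
        rw [transfer, hex]; exact hx1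
      exact ⟨⟨u, hP⟩, Subtype.ext hex⟩
  rw [Nat.card_eq_of_bijective f hbij, Nat.card_eq_fintype_card, A18.card6]
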